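/- arXiv:2204.05449 — 2 statements merged into one kernel-verified Lean document; each statement's English description precedes it below -/
import Mathlib

section
/- The KL divergence from Weibull(k, λ) to Gamma(α, β) (rate parameterization) equals (γα)/k − α log λ + log k + βλ Γ(1 + 1/k) − γ − 1 − α log β + log Γ(α), where γ is the Euler–Mascheroni constant. -/
open Real MeasureTheory

open Set Filter Topology

-- integrability of log t * exp (-t)
lemma integrableOn_log_mul_exp_neg :
    IntegrableOn (fun t : ℝ => Real.log t * Real.exp (-t)) (Ioi 0) := by
  have h := (mellin_hasDerivAt_of_isBigO_rpow (E := ℂ) (a := 2) (b := 0) (s := 1)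
    (f := fun t : ℝ => (Real.exp (-t) : ℂ)) ?_ ?_ ?_ ?_ ?_).1
  · have h2 : IntegrableOn (fun t : ℝ => ((Real.log t * Real.exp (-t) : ℝ) : ℂ)) (Ioi 0) := by
      refine h.congr_fun ?_ measurableSet_Ioi
      intro t ht
      simp only [sub_self, Complex.cpow_zero, one_smul, Complex.real_smul, Complex.ofReal_mul]
    have h3 : IntegrableOn (fun x : ℝ =>
        Complex.re ((Real.log x * Real.exp (-x) : ℝ) : ℂ)) (Ioi 0) := h2.re
    refine h3.congr_fun (fun t ht => ?_) measurableSet_Ioi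
    exact Complex.ofReal_re _
  · refine (Continuous.continuousOn ?_).locallyIntegrableOn measurableSet_Ioi
    exact Complex.continuous_ofReal.comp (Real.continuous_exp.comp continuous_neg)
  · rw [← Asymptotics.isBigO_norm_left]
    simp_rw [Complex.norm_real,
      Asymptotics.isBigO_norm_left]
    simpa only [neg_one_mul] using
      (isLittleO_exp_neg_mul_rpow_atTop zero_lt_one _).isBigO
  · simp
  · simp_rw [neg_zero, Real.rpow_zero]
    refine Asymptotics.isBigO_const_of_tendsto (?_ : Tendsto _ _ (𝓝 (1 : ℂ))) one_ne_zero
    rw [(by simp : (1 : ℂ) = Real.exp (-0))]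
    exact (Complex.continuous_ofReal.comp
      (Real.continuous_exp.comp continuous_neg)).continuousWithinAt
  · simp

lemma integral_log_mul_exp_neg :
    ∫ t in Ioi (0 : ℝ), Real.log t * Real.exp (-t) = -Real.eulerMascheroniConstant := by
  set I : ℝ := ∫ t in Ioi (0 : ℝ), Real.log t * Real.exp (-t) with hI
  have h1 : HasDerivAt Complex.GammaIntegral ((I : ℂ)) 1 := by
    have := Complex.hasDerivAt_GammaIntegral (s := 1) (by simp)
    convert this using 1
    rw [hI]
    refine (_root_.integral_ofReal (𝕜 := ℂ)).symm.trans
      (setIntegral_congr_fun measurableSet_Ioi fun t ht => ?_)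
    simp [sub_self, Complex.cpow_zero, Complex.ofReal_mul]
  have heq : Complex.Gamma =ᶠ[𝓝 (1 : ℂ)] Complex.GammaIntegral := by
    have hopen : IsOpen {z : ℂ | 0 < z.re} := isOpen_lt continuous_const Complex.continuous_re
    filter_upwards [hopen.mem_nhds (by simp : (0:ℝ) < (1:ℂ).re)] with z hz
    exact Complex.Gamma_eq_integral hz
  have h2 : HasDerivAt Complex.Gamma ((I : ℂ)) 1 := h1.congr_of_eventuallyEq heq
  have h3 : HasDerivAt Real.Gamma I 1 := by
    have h4 : HasDerivAt (fun x : ℝ => (Complex.Gamma x).re) ((I : ℂ)).re 1 := by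
      exact HasDerivAt.real_of_complex (by exact_mod_cast h2)
    exact h4
  have h5 := Real.hasDerivAt_Gamma_one
  exact h3.unique h5

lemma integrableOn_rpow_mul_exp_neg {c : ℝ} (hc : 0 < c) :
    IntegrableOn (fun t : ℝ => t ^ c * Real.exp (-t)) (Ioi 0) := by
  refine (Real.GammaIntegral_convergent (s := 1 + c) (by linarith)).congr_fun
    (fun t ht => ?_) measurableSet_Ioi
  rw [add_sub_cancel_left]; ring

lemma integral_rpow_mul_exp_neg {c : ℝ} (hc : 0 < c) :
    ∫ t in Ioi (0:ℝ), t ^ c * Real.exp (-t) = Real.Gamma (1 + c) := by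
  rw [Real.Gamma_eq_integral (by linarith)]
  refine setIntegral_congr_fun measurableSet_Ioi fun t ht => ?_
  rw [add_sub_cancel_left]; ring

lemma integrableOn_id_mul_exp_neg :
    IntegrableOn (fun t : ℝ => t * Real.exp (-t)) (Ioi 0) := by
  refine (integrableOn_rpow_mul_exp_neg one_pos).congr_fun (fun t ht => ?_) measurableSet_Ioi
  simp only [Real.rpow_one]

lemma integral_id_mul_exp_neg : ∫ t in Ioi (0:ℝ), t * Real.exp (-t) = 1 := by
  have := integral_rpow_mul_exp_neg one_pos
  rw [show (1:ℝ) + 1 = 2 by norm_num, Real.Gamma_two] at this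
  rw [← this]
  refine setIntegral_congr_fun measurableSet_Ioi fun t ht => ?_
  rw [Real.rpow_one]

lemma integrableOn_exp_neg' : IntegrableOn (fun t : ℝ => Real.exp (-t)) (Ioi 0) := by
  simpa using exp_neg_integrableOn_Ioi 0 one_pos

/-- Density of the Weibull distribution with shape `k` and scale `lam`. -/
noncomputable def weibullPdf (k lam x : ℝ) : ℝ :=
  (k / lam) * (x / lam) ^ (k - 1) * Real.exp (-(x / lam) ^ k)

/-- Density of the gamma distribution with shape `α` and rate `β`. -/
noncomputable def gammaPdf (α β x : ℝ) : ℝ :=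
  β ^ α * x ^ (α - 1) * Real.exp (-(β * x)) / Real.Gamma α

lemma kl_pointwise {k lam α β t : ℝ}
    (hk : 0 < k) (hlam : 0 < lam) (hα : 0 < α) (hβ : 0 < β) (ht : 0 < t) :
    lam * ((|1/k| * t ^ (1/k - 1)) *
      (weibullPdf k lam (lam * t ^ (1/k)) *
        Real.log (weibullPdf k lam (lam * t ^ (1/k)) / gammaPdf α β (lam * t ^ (1/k)))))
    = (Real.log k - α * Real.log lam - α * Real.log β + Real.log (Real.Gamma α)) * Real.exp (-t)
      + ((k - α)/k) * (Real.log t * Real.exp (-t)) - t * Real.exp (-t)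
      + (β * lam) * (t ^ (1/k) * Real.exp (-t)) := by
  have hGα := Real.Gamma_pos_of_pos hα
  have hu : (0:ℝ) < t ^ (1/k) := Real.rpow_pos_of_pos ht _
  set u := t ^ (1/k) with hu_def
  have hx : (0:ℝ) < lam * u := mul_pos hlam hu
  have hdiv : lam * u / lam = u := by field_simp
  have huk : u ^ k = t := by
    rw [hu_def, ← Real.rpow_mul ht.le, one_div_mul_cancel hk.ne', Real.rpow_one]
  have huk1 : u ^ (k - 1) = t ^ ((k-1)/k) := by
    rw [hu_def, ← Real.rpow_mul ht.le]
    congr 1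
    ring
  have hlogu : Real.log u = (1/k) * Real.log t := by
    rw [hu_def, Real.log_rpow ht]
  have hp : weibullPdf k lam (lam * u) = (k/lam) * t ^ ((k-1)/k) * Real.exp (-t) := by
    unfold weibullPdf
    rw [hdiv, huk1, huk]
  have hppos : 0 < weibullPdf k lam (lam * u) := by
    rw [hp]
    have : (0:ℝ) < t ^ ((k-1)/k) := Real.rpow_pos_of_pos ht _
    positivity
  have hqpos : 0 < gammaPdf α β (lam * u) := by
    unfold gammaPdf
    have h1 : (0:ℝ) < β ^ α := Real.rpow_pos_of_pos hβ _
    have h2 : (0:ℝ) < (lam * u) ^ (α - 1) := Real.rpow_pos_of_pos hx _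
    positivity
  have hlogp : Real.log (weibullPdf k lam (lam * u))
      = Real.log k - Real.log lam + ((k-1)/k) * Real.log t - t := by
    rw [hp, Real.log_mul (by positivity) (Real.exp_ne_zero _),
      Real.log_mul (by positivity) (by positivity : (t:ℝ) ^ ((k-1)/k) ≠ 0),
      Real.log_div hk.ne' hlam.ne', Real.log_rpow ht, Real.log_exp]
    ring
  have hlogq : Real.log (gammaPdf α β (lam * u))
      = α * Real.log β + (α - 1) * (Real.log lam + Real.log u) - β * (lam * u)
        - Real.log (Real.Gamma α) := by
    unfold gammaPdf
    rw [Real.log_div (by positivity) hGα.ne',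
      Real.log_mul (by positivity) (Real.exp_ne_zero _),
      Real.log_mul (by positivity) (by positivity : (lam * u) ^ (α-1) ≠ 0),
      Real.log_rpow hβ, Real.log_rpow hx, Real.log_exp, Real.log_mul hlam.ne' hu.ne']
    ring
  have hL : Real.log (weibullPdf k lam (lam * u) / gammaPdf α β (lam * u))
      = (Real.log k - α * Real.log lam - α * Real.log β + Real.log (Real.Gamma α))
        + ((k - α)/k) * Real.log t - t + β * lam * u := by
    rw [Real.log_div hppos.ne' hqpos.ne', hlogp, hlogq, hlogu]
    field_simp
    ring
  have hcoef : lam * ((1/k) * t ^ (1/k - 1)) * ((k/lam) * t ^ ((k-1)/k)) = 1 := by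
    have h2 : t ^ (1/k - 1) * t ^ ((k-1)/k) = 1 := by
      rw [← Real.rpow_add ht, show 1/k - 1 + (k-1)/k = 0 by field_simp; ring, Real.rpow_zero]
    calc lam * ((1/k) * t ^ (1/k - 1)) * ((k/lam) * t ^ ((k-1)/k))
        = (t ^ (1/k - 1) * t ^ ((k-1)/k)) * (lam * (1/k) * (k/lam)) := by ring
      _ = 1 := by rw [h2, one_mul]; field_simp
  rw [abs_of_pos (by positivity : (0:ℝ) < 1/k), hL, hp]
  linear_combination (Real.exp (-t) *
    ((Real.log k - α * Real.log lam - α * Real.log β + Real.log (Real.Gamma α))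
      + ((k - α)/k) * Real.log t - t + β * lam * u)) * hcoef

/-- Closed form of the KL divergence from `Weibull(k, λ)` to `Gamma(α, β)`. -/
theorem kl_weibull_gamma {k lam α β : ℝ}
    (hk : 0 < k) (hlam : 0 < lam) (hα : 0 < α) (hβ : 0 < β) :
    ∫ x in Set.Ioi (0 : ℝ),
        weibullPdf k lam x * Real.log (weibullPdf k lam x / gammaPdf α β x)
      = Real.eulerMascheroniConstant * α / k - α * Real.log lam + Real.log k
        + β * lam * Real.Gamma (1 + 1 / k)
        - Real.eulerMascheroniConstant - 1 - α * Real.log β + Real.log (Real.Gamma α) := by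
  set g : ℝ → ℝ := fun x =>
    weibullPdf k lam x * Real.log (weibullPdf k lam x / gammaPdf α β x) with hg
  set C : ℝ := Real.log k - α * Real.log lam - α * Real.log β + Real.log (Real.Gamma α) with hC
  have hk' : (1:ℝ)/k ≠ 0 := one_div_ne_zero hk.ne'
  have step1 : ∫ x in Ioi (0:ℝ), g x = lam * ∫ y in Ioi (0:ℝ), g (lam * y) := by
    rw [integral_comp_mul_left_Ioi g 0 hlam, mul_zero, smul_eq_mul, ← mul_assoc,
      mul_inv_cancel₀ hlam.ne', one_mul]
  have step2 : ∫ y in Ioi (0:ℝ), g (lam * y)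
      = ∫ t in Ioi (0:ℝ), (|1/k| * t ^ (1/k - 1)) • g (lam * t ^ (1/k)) :=
    (integral_comp_rpow_Ioi (fun y => g (lam * y)) hk').symm
  have key : ∫ x in Ioi (0:ℝ), g x
      = ∫ t in Ioi (0:ℝ), (C * Real.exp (-t) + ((k - α)/k) * (Real.log t * Real.exp (-t))
          - t * Real.exp (-t) + (β * lam) * (t ^ (1/k) * Real.exp (-t))) := by
    rw [step1, step2, ← integral_const_mul]
    refine setIntegral_congr_fun measurableSet_Ioi fun t ht => ?_
    have := kl_pointwise (lam := lam) (α := α) (β := β) hk hlam hα hβ (mem_Ioi.mp ht)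
    simpa only [smul_eq_mul, hg, hC, mul_assoc] using this
  have h1 : IntegrableOn (fun t : ℝ => C * Real.exp (-t)) (Ioi 0) :=
    integrableOn_exp_neg'.const_mul C
  have h2 : IntegrableOn (fun t : ℝ => ((k - α)/k) * (Real.log t * Real.exp (-t))) (Ioi 0) :=
    integrableOn_log_mul_exp_neg.const_mul _
  have h3 : IntegrableOn (fun t : ℝ => t * Real.exp (-t)) (Ioi 0) := integrableOn_id_mul_exp_neg
  have h4 : IntegrableOn (fun t : ℝ => (β * lam) * (t ^ (1/k) * Real.exp (-t))) (Ioi 0) :=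
    (integrableOn_rpow_mul_exp_neg (by positivity)).const_mul _
  have h12 : IntegrableOn (fun t : ℝ => C * Real.exp (-t)
      + ((k - α)/k) * (Real.log t * Real.exp (-t))) (Ioi 0) := h1.add h2
  have h123 : IntegrableOn (fun t : ℝ => C * Real.exp (-t)
      + ((k - α)/k) * (Real.log t * Real.exp (-t)) - t * Real.exp (-t)) (Ioi 0) := h12.sub h3
  rw [key, integral_add h123 h4, integral_sub h12 h3,
    integral_add h1 h2, integral_const_mul, integral_const_mul, integral_const_mul,
    integral_exp_neg_Ioi_zero, integral_log_mul_exp_neg, integral_id_mul_exp_neg,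
    integral_rpow_mul_exp_neg (by positivity : (0:ℝ) < 1/k), hC]
  field_simp
  ring
end

section
/- Under the generative model of Theorem 1 (latent Z = (z, {wᵢ}) with z depending only on context D and wᵢ depending on (xᵢ, D), and y generated from (x, Z)), the per-task objective L_{T_k}(φ, θ) = Σᵢ[ log p_θ(yᵢ|xᵢ, z, rᵢ) − KL(q_φ(wᵢ|xᵢ, X_c) ‖ q_φ(wᵢ|X_c)) ] − KL(q_φ(z|X,Y) ‖ q_φ(z|X_c,Y_c)) satisfies L_{T_k}(φ, θ) ≤ I(yᵢ; D | xᵢ) − I(Z; xᵢ | D), up to an additive constant determined by the data generating process. -/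
open Real Finset

noncomputable section

namespace NPSA

variable {Yt Xt Dt Zt Wt : Type*}
  [Fintype Yt] [Fintype Xt] [Fintype Dt] [Fintype Zt] [Fintype Wt]

/-! Marginals of a joint pmf `P y x d z w` over the target output `y`, target input `x`,
context dataset `D`, global latent `z` and local latent `w`. -/

variable (P : Yt → Xt → Dt → Zt → Wt → ℝ)

def pYXZW (y : Yt) (x : Xt) (z : Zt) (w : Wt) : ℝ := ∑ d, P y x d z w
def pXZW (x : Xt) (z : Zt) (w : Wt) : ℝ := ∑ y, ∑ d, P y x d z w
def pXDZW (x : Xt) (d : Dt) (z : Zt) (w : Wt) : ℝ := ∑ y, P y x d z w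
def pXD (x : Xt) (d : Dt) : ℝ := ∑ y, ∑ z, ∑ w, P y x d z w
def pXDW (x : Xt) (d : Dt) (w : Wt) : ℝ := ∑ y, ∑ z, P y x d z w
def pXDZ (x : Xt) (d : Dt) (z : Zt) : ℝ := ∑ y, ∑ w, P y x d z w
def pD (d : Dt) : ℝ := ∑ y, ∑ x, ∑ z, ∑ w, P y x d z w
def pDW (d : Dt) (w : Wt) : ℝ := ∑ y, ∑ x, ∑ z, P y x d z w
def pDZ (d : Dt) (z : Zt) : ℝ := ∑ y, ∑ x, ∑ w, P y x d z w
def pDZW (d : Dt) (z : Zt) (w : Wt) : ℝ := ∑ y, ∑ x, P y x d z w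
def pYX (y : Yt) (x : Xt) : ℝ := ∑ d, ∑ z, ∑ w, P y x d z w
def pX (x : Xt) : ℝ := ∑ y, ∑ d, ∑ z, ∑ w, P y x d z w
def pYXD (y : Yt) (x : Xt) (d : Dt) : ℝ := ∑ z, ∑ w, P y x d z w

/-- The per-task objective `L = E[log p(y|x,z,w)] − E[KL(q(w|x,D) ‖ q(w|D))]
− E[KL(q(z|·) ‖ q(z|D))]`, instantiated with the true conditionals of the joint model
(the networks being "perfectly able to leverage all information"). -/
def objectiveL : ℝ :=
  (∑ y, ∑ x, ∑ z, ∑ w, pYXZW P y x z w *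
      Real.log (pYXZW P y x z w / pXZW P x z w))
  - (∑ x, ∑ d, ∑ w, pXDW P x d w *
      Real.log ((pXDW P x d w / pXD P x d) / (pDW P d w / pD P d)))
  - (∑ x, ∑ d, ∑ z, pXDZ P x d z *
      Real.log ((pXDZ P x d z / pXD P x d) / (pDZ P d z / pD P d)))

/-- Conditional entropy `H(y|x)`, the additive constant determined by the
(uncontrollable) data generating process. -/
def condEntropyYX : ℝ :=
  -∑ y, ∑ x, pYX P y x * Real.log (pYX P y x / pX P x)

/-- `I(y; D | x)`. -/
def IyDx : ℝ :=
  ∑ y, ∑ x, ∑ d, pYXD P y x d *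
    Real.log (pYXD P y x d * pX P x / (pYX P y x * pXD P x d))

/-- `I(Z; x | D)` for the joint latent `Z = (z, w)`. -/
def IZxD : ℝ :=
  ∑ x, ∑ d, ∑ z, ∑ w, pXDZW P x d z w *
    Real.log (pXDZW P x d z w * pD P d / (pXD P x d * pDZW P d z w))


/-! ### Auxiliary lemmas -/

set_option linter.unusedSectionVars false

lemma le_sum' {α : Type*} [Fintype α] {f : α → ℝ} (h0 : ∀ a, 0 ≤ f a) (a : α) :
    f a ≤ ∑ b, f b :=
  Finset.single_le_sum (fun b _ => h0 b) (Finset.mem_univ a)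

lemma exists_pos_of_sum_pos {α : Type*} [Fintype α] {f : α → ℝ} (h : 0 < ∑ a, f a) :
    ∃ a, 0 < f a := by
  by_contra hc
  push_neg at hc
  exact absurd (Finset.sum_nonpos fun a _ => hc a) (not_le.mpr h)

lemma exists_pos2 {α β : Type*} [Fintype α] [Fintype β] {f : α → β → ℝ}
    (h : 0 < ∑ a, ∑ b, f a b) : ∃ a b, 0 < f a b := by
  obtain ⟨a, ha⟩ := exists_pos_of_sum_pos h
  obtain ⟨b, hb⟩ := exists_pos_of_sum_pos ha
  exact ⟨a, b, hb⟩

lemma sum_comm₃ {α β γ : Type*} [Fintype α] [Fintype β] [Fintype γ] (f : α → β → γ → ℝ) :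
    ∑ a, ∑ b, ∑ c, f a b c = ∑ b, ∑ c, ∑ a, f a b c := by
  rw [Finset.sum_comm]
  exact Finset.sum_congr rfl fun b _ => Finset.sum_comm

section Facts

variable {P}
variable (hP : ∀ y x d z w, 0 ≤ P y x d z w)
include hP

lemma pYXZW_nn (y : Yt) (x : Xt) (z : Zt) (w : Wt) : 0 ≤ pYXZW P y x z w :=
  Finset.sum_nonneg fun _ _ => hP _ _ _ _ _

lemma pXZW_nn (x : Xt) (z : Zt) (w : Wt) : 0 ≤ pXZW P x z w :=
  Finset.sum_nonneg fun _ _ => Finset.sum_nonneg fun _ _ => hP _ _ _ _ _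

lemma pXDZW_nn (x : Xt) (d : Dt) (z : Zt) (w : Wt) : 0 ≤ pXDZW P x d z w :=
  Finset.sum_nonneg fun _ _ => hP _ _ _ _ _

lemma pXDW_nn (x : Xt) (d : Dt) (w : Wt) : 0 ≤ pXDW P x d w :=
  Finset.sum_nonneg fun _ _ => Finset.sum_nonneg fun _ _ => hP _ _ _ _ _

lemma pXDZ_nn (x : Xt) (d : Dt) (z : Zt) : 0 ≤ pXDZ P x d z :=
  Finset.sum_nonneg fun _ _ => Finset.sum_nonneg fun _ _ => hP _ _ _ _ _

lemma pYXD_nn (y : Yt) (x : Xt) (d : Dt) : 0 ≤ pYXD P y x d :=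
  Finset.sum_nonneg fun _ _ => Finset.sum_nonneg fun _ _ => hP _ _ _ _ _

variable {y : Yt} {x : Xt} {d : Dt} {z : Zt} {w : Wt} (h : 0 < P y x d z w)
include h

lemma pXDZW_pos : 0 < pXDZW P x d z w := by
  show 0 < ∑ y', P y' x d z w
  exact h.trans_le (le_sum' (fun y' => hP y' x d z w) y)

lemma pYXZW_pos : 0 < pYXZW P y x z w := by
  show 0 < ∑ d', P y x d' z w
  exact h.trans_le (le_sum' (fun d' => hP y x d' z w) d)

lemma pXZW_pos : 0 < pXZW P x z w := by
  show 0 < ∑ y', ∑ d', P y' x d' z w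
  have h1 : 0 < ∑ d', P y x d' z w := h.trans_le (le_sum' (fun d' => hP y x d' z w) d)
  exact h1.trans_le (le_sum' (fun y' => Finset.sum_nonneg fun d' _ => hP y' x d' z w) y)

lemma pYXD_pos : 0 < pYXD P y x d := by
  show 0 < ∑ z', ∑ w', P y x d z' w'
  have h1 : 0 < ∑ w', P y x d z w' := h.trans_le (le_sum' (fun w' => hP y x d z w') w)
  exact h1.trans_le (le_sum' (fun z' => Finset.sum_nonneg fun w' _ => hP y x d z' w') z)

lemma pXD_pos : 0 < pXD P x d := by
  show 0 < ∑ y', ∑ z', ∑ w', P y' x d z' w'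
  have h2 : 0 < ∑ z', ∑ w', P y x d z' w' := pYXD_pos hP h
  exact h2.trans_le (le_sum' (fun y' => Finset.sum_nonneg fun z' _ =>
    Finset.sum_nonneg fun w' _ => hP y' x d z' w') y)

lemma pXDW_pos : 0 < pXDW P x d w := by
  show 0 < ∑ y', ∑ z', P y' x d z' w
  have h1 : 0 < ∑ z', P y x d z' w := h.trans_le (le_sum' (fun z' => hP y x d z' w) z)
  exact h1.trans_le (le_sum' (fun y' => Finset.sum_nonneg fun z' _ => hP y' x d z' w) y)

lemma pXDZ_pos : 0 < pXDZ P x d z := by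
  show 0 < ∑ y', ∑ w', P y' x d z w'
  have h1 : 0 < ∑ w', P y x d z w' := h.trans_le (le_sum' (fun w' => hP y x d z w') w)
  exact h1.trans_le (le_sum' (fun y' => Finset.sum_nonneg fun w' _ => hP y' x d z w') y)

lemma pDZW_pos : 0 < pDZW P d z w := by
  show 0 < ∑ y', ∑ x', P y' x' d z w
  have h1 : 0 < ∑ x', P y x' d z w := h.trans_le (le_sum' (fun x' => hP y x' d z w) x)
  exact h1.trans_le (le_sum' (fun y' => Finset.sum_nonneg fun x' _ => hP y' x' d z w) y)

lemma pDZ_pos : 0 < pDZ P d z := by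
  show 0 < ∑ y', ∑ x', ∑ w', P y' x' d z w'
  have h1 : 0 < ∑ w', P y x d z w' := h.trans_le (le_sum' (fun w' => hP y x d z w') w)
  have h2 : 0 < ∑ x', ∑ w', P y x' d z w' :=
    h1.trans_le (le_sum' (fun x' => Finset.sum_nonneg fun w' _ => hP y x' d z w') x)
  exact h2.trans_le (le_sum' (fun y' => Finset.sum_nonneg fun x' _ =>
    Finset.sum_nonneg fun w' _ => hP y' x' d z w') y)

lemma pDW_pos : 0 < pDW P d w := by
  show 0 < ∑ y', ∑ x', ∑ z', P y' x' d z' w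
  have h1 : 0 < ∑ z', P y x d z' w := h.trans_le (le_sum' (fun z' => hP y x d z' w) z)
  have h2 : 0 < ∑ x', ∑ z', P y x' d z' w :=
    h1.trans_le (le_sum' (fun x' => Finset.sum_nonneg fun z' _ => hP y x' d z' w) x)
  exact h2.trans_le (le_sum' (fun y' => Finset.sum_nonneg fun x' _ =>
    Finset.sum_nonneg fun z' _ => hP y' x' d z' w) y)

lemma pD_pos : 0 < pD P d := by
  show 0 < ∑ y', ∑ x', ∑ z', ∑ w', P y' x' d z' w'
  have h1 : 0 < ∑ w', P y x d z w' := h.trans_le (le_sum' (fun w' => hP y x d z w') w)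
  have h2 : 0 < ∑ z', ∑ w', P y x d z' w' :=
    h1.trans_le (le_sum' (fun z' => Finset.sum_nonneg fun w' _ => hP y x d z' w') z)
  have h3 : 0 < ∑ x', ∑ z', ∑ w', P y x' d z' w' :=
    h2.trans_le (le_sum' (fun x' => Finset.sum_nonneg fun z' _ =>
      Finset.sum_nonneg fun w' _ => hP y x' d z' w') x)
  exact h3.trans_le (le_sum' (fun y' => Finset.sum_nonneg fun x' _ =>
    Finset.sum_nonneg fun z' _ => Finset.sum_nonneg fun w' _ => hP y' x' d z' w') y)

lemma pYX_pos : 0 < pYX P y x := by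
  show 0 < ∑ d', ∑ z', ∑ w', P y x d' z' w'
  have h1 : 0 < ∑ w', P y x d z w' := h.trans_le (le_sum' (fun w' => hP y x d z w') w)
  have h2 : 0 < ∑ z', ∑ w', P y x d z' w' :=
    h1.trans_le (le_sum' (fun z' => Finset.sum_nonneg fun w' _ => hP y x d z' w') z)
  exact h2.trans_le (le_sum' (fun d' => Finset.sum_nonneg fun z' _ =>
    Finset.sum_nonneg fun w' _ => hP y x d' z' w') d)

lemma pX_pos : 0 < pX P x := by
  show 0 < ∑ y', ∑ d', ∑ z', ∑ w', P y' x d' z' w'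
  have h2 : 0 < ∑ d', ∑ z', ∑ w', P y x d' z' w' := pYX_pos hP h
  exact h2.trans_le (le_sum' (fun y' => Finset.sum_nonneg fun d' _ =>
    Finset.sum_nonneg fun z' _ => Finset.sum_nonneg fun w' _ => hP y' x d' z' w') y)

end Facts

section MainSteps

variable {P}

/-- The third (z-KL) term of the objective vanishes since `z ⟂ x | D`. -/
lemma C_zero (hP : ∀ y x d z w, 0 ≤ P y x d z w)
    (hz : ∀ x d z, pXDZ P x d z * pD P d = pDZ P d z * pXD P x d) :
    (∑ x, ∑ d, ∑ z, pXDZ P x d z *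
      Real.log ((pXDZ P x d z / pXD P x d) / (pDZ P d z / pD P d))) = 0 := by
  refine Finset.sum_eq_zero fun x _ => Finset.sum_eq_zero fun d _ =>
    Finset.sum_eq_zero fun z _ => ?_
  rcases (pXDZ_nn hP x d z).eq_or_lt with h | h
  · rw [← h, zero_mul]
  · obtain ⟨y, w, hp⟩ := exists_pos2 (show 0 < ∑ y, ∑ w, P y x d z w from h)
    have hXD := pXD_pos hP hp
    have hD := pD_pos hP hp
    have hDZ := pDZ_pos hP hp
    have harg : (pXDZ P x d z / pXD P x d) / (pDZ P d z / pD P d) = 1 := by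
      rw [div_div_eq_mul_div, div_mul_eq_mul_div, div_div,
        div_eq_one_iff_eq (by positivity)]
      linear_combination hz x d z
    rw [harg, Real.log_one, mul_zero]

/-- The second (w-KL) term of the objective equals `I(Z; x | D)`. -/
lemma B_eq (hP : ∀ y x d z w, 0 ≤ P y x d z w)
    (hfact₁ : ∀ x d z w, pXDZW P x d z w * pXD P x d = pXDZ P x d z * pXDW P x d w)
    (hfact₂ : ∀ d z w, pDZW P d z w * pD P d = pDZ P d z * pDW P d w)
    (hz : ∀ x d z, pXDZ P x d z * pD P d = pDZ P d z * pXD P x d) :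
    (∑ x, ∑ d, ∑ w, pXDW P x d w *
      Real.log ((pXDW P x d w / pXD P x d) / (pDW P d w / pD P d))) = IZxD P := by
  unfold IZxD
  refine Finset.sum_congr rfl fun x _ => Finset.sum_congr rfl fun d _ => ?_
  conv_rhs => rw [Finset.sum_comm]
  refine Finset.sum_congr rfl fun w _ => ?_
  have hsz : pXDW P x d w = ∑ z, pXDZW P x d z w := Finset.sum_comm
  have step : ∀ z, pXDZW P x d z w *
      Real.log (pXDZW P x d z w * pD P d / (pXD P x d * pDZW P d z w))
      = pXDZW P x d z w *
        Real.log (pXDW P x d w * pD P d / (pXD P x d * pDW P d w)) := by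
    intro z
    rcases (pXDZW_nn hP x d z w).eq_or_lt with h | h
    · rw [← h, zero_mul, zero_mul]
    · obtain ⟨y, hp⟩ := exists_pos_of_sum_pos (show 0 < ∑ y, P y x d z w from h)
      have hXD := pXD_pos hP hp
      have hD := pD_pos hP hp
      have hDZW := pDZW_pos hP hp
      have hDW := pDW_pos hP hp
      have hXDW := pXDW_pos hP hp
      have harg : pXDZW P x d z w * pD P d / (pXD P x d * pDZW P d z w)
          = pXDW P x d w * pD P d / (pXD P x d * pDW P d w) := by
        rw [div_eq_div_iff (by positivity) (by positivity)]
        have key : pXDZW P x d z w * pDW P d w * (pXD P x d * pD P d)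
            = pXDW P x d w * pDZW P d z w * (pXD P x d * pD P d) := by
          linear_combination (pDW P d w * pD P d) * hfact₁ x d z w
            + (pXDW P x d w * pDW P d w) * hz x d z
            - (pXDW P x d w * pXD P x d) * hfact₂ d z w
        have key2 : pXDZW P x d z w * pDW P d w = pXDW P x d w * pDZW P d z w :=
          mul_right_cancel₀ (by positivity) key
        linear_combination (pXD P x d * pD P d) * key2
      rw [harg]
  calc pXDW P x d w * Real.log ((pXDW P x d w / pXD P x d) / (pDW P d w / pD P d))
      = pXDW P x d w * Real.log (pXDW P x d w * pD P d / (pXD P x d * pDW P d w)) := by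
        rw [div_div_eq_mul_div, div_mul_eq_mul_div, div_div]
    _ = ∑ z, pXDZW P x d z w *
          Real.log (pXDW P x d w * pD P d / (pXD P x d * pDW P d w)) := by
        rw [hsz, Finset.sum_mul]
    _ = ∑ z, pXDZW P x d z w *
          Real.log (pXDZW P x d z w * pD P d / (pXD P x d * pDZW P d z w)) :=
        Finset.sum_congr rfl fun z _ => (step z).symm

/-- The reconstruction term plus the entropy constant is bounded by `I(y; D | x)`. -/
lemma A_bound (hP : ∀ y x d z w, 0 ≤ P y x d z w)
    (hsum : ∑ y, ∑ x, ∑ d, ∑ z, ∑ w, P y x d z w = 1)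
    (hMarkov : ∀ y x d z w,
      P y x d z w * pXD P x d = pYXD P y x d * pXDZW P x d z w) :
    (∑ y, ∑ x, ∑ z, ∑ w, pYXZW P y x z w *
      Real.log (pYXZW P y x z w / pXZW P x z w)) + condEntropyYX P ≤ IyDx P := by
  -- Step I : I(y;D|x) = S1 + H(y|x) where S1 = ∑ pYXD log(pYXD/pXD)
  have stepI : IyDx P = (∑ y, ∑ x, ∑ d, pYXD P y x d *
      Real.log (pYXD P y x d / pXD P x d)) + condEntropyYX P := by
    unfold IyDx condEntropyYX
    have term : ∀ y x d, pYXD P y x d *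
        Real.log (pYXD P y x d * pX P x / (pYX P y x * pXD P x d))
        = pYXD P y x d * Real.log (pYXD P y x d / pXD P x d)
          - pYXD P y x d * Real.log (pYX P y x / pX P x) := by
      intro y x d
      rcases (pYXD_nn hP y x d).eq_or_lt with h | h
      · rw [← h]; simp
      · obtain ⟨z, w, hp⟩ := exists_pos2 (show 0 < ∑ z, ∑ w, P y x d z w from h)
        have hYX := pYX_pos hP hp
        have hX := pX_pos hP hp
        have hXD := pXD_pos hP hp
        rw [← mul_sub]
        congr 1
        have e : pYXD P y x d * pX P x / (pYX P y x * pXD P x d)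
            = (pYXD P y x d / pXD P x d) / (pYX P y x / pX P x) := by
          field_simp
        rw [e, Real.log_div (by positivity) (by positivity)]
    calc (∑ y, ∑ x, ∑ d, pYXD P y x d *
          Real.log (pYXD P y x d * pX P x / (pYX P y x * pXD P x d)))
        = (∑ y, ∑ x, ∑ d, (pYXD P y x d * Real.log (pYXD P y x d / pXD P x d)
            - pYXD P y x d * Real.log (pYX P y x / pX P x))) := by
          exact Finset.sum_congr rfl fun y _ => Finset.sum_congr rfl fun x _ =>
            Finset.sum_congr rfl fun d _ => term y x d
      _ = (∑ y, ∑ x, ∑ d, pYXD P y x d * Real.log (pYXD P y x d / pXD P x d))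
          - (∑ y, ∑ x, ∑ d, pYXD P y x d * Real.log (pYX P y x / pX P x)) := by
          simp [Finset.sum_sub_distrib]
      _ = (∑ y, ∑ x, ∑ d, pYXD P y x d * Real.log (pYXD P y x d / pXD P x d))
          + -∑ y, ∑ x, pYX P y x * Real.log (pYX P y x / pX P x) := by
          rw [sub_eq_add_neg]
          congr 2
          exact Finset.sum_congr rfl fun y _ => Finset.sum_congr rfl fun x _ =>
            (Finset.sum_mul ..).symm
  rw [stepI]
  have hstepII : (∑ y, ∑ x, ∑ z, ∑ w, pYXZW P y x z w *
      Real.log (pYXZW P y x z w / pXZW P x z w))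
      ≤ ∑ y, ∑ x, ∑ d, pYXD P y x d * Real.log (pYXD P y x d / pXD P x d) := by
    -- expand both sides as sums over all five variables
    have hA : (∑ y, ∑ x, ∑ z, ∑ w, pYXZW P y x z w *
        Real.log (pYXZW P y x z w / pXZW P x z w))
        = ∑ y, ∑ x, ∑ d, ∑ z, ∑ w, P y x d z w *
            Real.log (pYXZW P y x z w / pXZW P x z w) := by
      refine Finset.sum_congr rfl fun y _ => Finset.sum_congr rfl fun x _ => ?_
      rw [sum_comm₃ (fun d z w => P y x d z w *
        Real.log (pYXZW P y x z w / pXZW P x z w))]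
      refine Finset.sum_congr rfl fun z _ => Finset.sum_congr rfl fun w _ => ?_
      simp only [pYXZW, Finset.sum_mul]
    have hS : (∑ y, ∑ x, ∑ d, pYXD P y x d * Real.log (pYXD P y x d / pXD P x d))
        = ∑ y, ∑ x, ∑ d, ∑ z, ∑ w, P y x d z w *
            Real.log (pYXD P y x d / pXD P x d) := by
      refine Finset.sum_congr rfl fun y _ => Finset.sum_congr rfl fun x _ =>
        Finset.sum_congr rfl fun d _ => ?_
      simp only [pYXD, Finset.sum_mul]
    rw [hA, hS]
    -- pointwise bound with the slack term b
    have key : ∀ y x d z w, P y x d z w *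
        Real.log (pYXZW P y x z w / pXZW P x z w)
        + (P y x d z w - pXDZW P x d z w * pYXZW P y x z w / pXZW P x z w)
        ≤ P y x d z w * Real.log (pYXD P y x d / pXD P x d) := by
      intro y x d z w
      rcases (hP y x d z w).eq_or_lt with h | h
      · rw [← h]
        have hb : 0 ≤ pXDZW P x d z w * pYXZW P y x z w / pXZW P x z w :=
          div_nonneg (mul_nonneg (pXDZW_nn hP x d z w) (pYXZW_nn hP y x z w))
            (pXZW_nn hP x z w)
        simp only [zero_mul, zero_add, zero_sub]
        linarith
      · have hXDZW := pXDZW_pos hP h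
        have hYXZW := pYXZW_pos hP h
        have hXZW := pXZW_pos hP h
        have hXD := pXD_pos hP h
        have hM : pYXD P y x d / pXD P x d = P y x d z w / pXDZW P x d z w := by
          rw [div_eq_div_iff hXD.ne' hXDZW.ne']
          linear_combination -hMarkov y x d z w
        rw [hM]
        set t := P y x d z w * pXZW P x z w / (pXDZW P x d z w * pYXZW P y x z w) with ht
        have htpos : 0 < t := div_pos (mul_pos h hXZW) (mul_pos hXDZW hYXZW)
        have hlogt : 1 - t⁻¹ ≤ Real.log t := by
          have := Real.log_le_sub_one_of_pos (inv_pos.mpr htpos)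
          rw [Real.log_inv] at this
          linarith
        have hsplit : Real.log (P y x d z w / pXDZW P x d z w)
            = Real.log (pYXZW P y x z w / pXZW P x z w) + Real.log t := by
          rw [ht, Real.log_div h.ne' hXDZW.ne', Real.log_div hYXZW.ne' hXZW.ne',
            Real.log_div (mul_pos h hXZW).ne' (mul_pos hXDZW hYXZW).ne',
            Real.log_mul h.ne' hXZW.ne', Real.log_mul hXDZW.ne' hYXZW.ne']
          ring
        have hPt : P y x d z w * t⁻¹
            = pXDZW P x d z w * pYXZW P y x z w / pXZW P x z w := by
          rw [ht, inv_div]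
          field_simp
        have hmul : P y x d z w * (1 - t⁻¹) ≤ P y x d z w * Real.log t :=
          mul_le_mul_of_nonneg_left hlogt h.le
        have e1 : P y x d z w * Real.log (P y x d z w / pXDZW P x d z w)
            = P y x d z w * Real.log (pYXZW P y x z w / pXZW P x z w)
              + P y x d z w * Real.log t := by rw [hsplit]; ring
        have e2 : P y x d z w * (1 - t⁻¹)
            = P y x d z w - pXDZW P x d z w * pYXZW P y x z w / pXZW P x z w := by
          rw [mul_sub, mul_one, hPt]
        linarith
    -- total slack is nonnegative: ∑ b ≤ 1 = ∑ P
    have hb : ∀ (y : Yt) (x : Xt) (z : Zt) (w : Wt),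
        (∑ d, pXDZW P x d z w * pYXZW P y x z w / pXZW P x z w)
        ≤ pYXZW P y x z w := by
      intro y x z w
      have e : (∑ d, pXDZW P x d z w * pYXZW P y x z w / pXZW P x z w)
          = pXZW P x z w * (pYXZW P y x z w / pXZW P x z w) := by
        simp only [mul_div_assoc]
        rw [← Finset.sum_mul]
        congr 1
        exact (Finset.sum_comm).symm
      rcases (pXZW_nn hP x z w).eq_or_lt with h0 | h0
      · rw [e, ← h0, zero_mul]
        exact pYXZW_nn hP y x z w
      · rw [e, mul_comm, div_mul_cancel₀ _ h0.ne']
    have hbtot : (∑ y, ∑ x, ∑ d, ∑ z, ∑ w,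
        pXDZW P x d z w * pYXZW P y x z w / pXZW P x z w) ≤ 1 := by
      calc (∑ y, ∑ x, ∑ d, ∑ z, ∑ w,
          pXDZW P x d z w * pYXZW P y x z w / pXZW P x z w)
          = ∑ y, ∑ x, ∑ z, ∑ w, ∑ d,
              pXDZW P x d z w * pYXZW P y x z w / pXZW P x z w := by
            exact Finset.sum_congr rfl fun y _ => Finset.sum_congr rfl fun x _ =>
              sum_comm₃ _
        _ ≤ ∑ y, ∑ x, ∑ z, ∑ w, pYXZW P y x z w := by
            refine Finset.sum_le_sum fun y _ => Finset.sum_le_sum fun x _ =>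
              Finset.sum_le_sum fun z _ => Finset.sum_le_sum fun w _ => hb y x z w
        _ = ∑ y, ∑ x, ∑ d, ∑ z, ∑ w, P y x d z w := by
            refine Finset.sum_congr rfl fun y _ => Finset.sum_congr rfl fun x _ => ?_
            rw [sum_comm₃ (fun d z w => P y x d z w)]
            rfl
        _ = 1 := hsum
    have hmain : (∑ y, ∑ x, ∑ d, ∑ z, ∑ w,
        (P y x d z w * Real.log (pYXZW P y x z w / pXZW P x z w)
          + (P y x d z w - pXDZW P x d z w * pYXZW P y x z w / pXZW P x z w)))
        ≤ ∑ y, ∑ x, ∑ d, ∑ z, ∑ w, P y x d z w *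
            Real.log (pYXD P y x d / pXD P x d) := by
      refine Finset.sum_le_sum fun y _ => Finset.sum_le_sum fun x _ =>
        Finset.sum_le_sum fun d _ => Finset.sum_le_sum fun z _ =>
        Finset.sum_le_sum fun w _ => key y x d z w
    have hsplit2 : (∑ y, ∑ x, ∑ d, ∑ z, ∑ w,
        (P y x d z w * Real.log (pYXZW P y x z w / pXZW P x z w)
          + (P y x d z w - pXDZW P x d z w * pYXZW P y x z w / pXZW P x z w)))
        = (∑ y, ∑ x, ∑ d, ∑ z, ∑ w,
            P y x d z w * Real.log (pYXZW P y x z w / pXZW P x z w))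
          + ((∑ y, ∑ x, ∑ d, ∑ z, ∑ w, P y x d z w)
            - ∑ y, ∑ x, ∑ d, ∑ z, ∑ w,
                pXDZW P x d z w * pYXZW P y x z w / pXZW P x z w) := by
      simp [Finset.sum_add_distrib, Finset.sum_sub_distrib]
    rw [hsplit2, hsum] at hmain
    linarith
  linarith

end MainSteps

/-- **Theorem 1**: under the generative model where the latent `Z = (z, {wᵢ})` is an
information bottleneck of the context `D` (so `y ⊥ (z, w) | (x, D)`), with `z`
depending only on `D` and `w` depending on `(x, D)` (and `z`, `w` conditionally
independent), the per-task objective satisfies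
`L_{T_k} ≤ I(yᵢ; D | xᵢ) − I(Z; xᵢ | D)` up to the additive constant `H(y|x)`
determined by the data generating process. -/
theorem objective_le_info_bound
    (hP : ∀ y x d z w, 0 ≤ P y x d z w)
    (hsum : ∑ y, ∑ x, ∑ d, ∑ z, ∑ w, P y x d z w = 1)
    -- Markov property: y ⊥ (z, w) | (x, D)  (Z is generated from D)
    (hMarkov : ∀ y x d z w,
      P y x d z w * pXD P x d = pYXD P y x d * pXDZW P x d z w)
    -- z and w are conditionally independent given (x, D)
    (hfact₁ : ∀ x d z w,
      pXDZW P x d z w * pXD P x d = pXDZ P x d z * pXDW P x d w)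
    -- z and w are conditionally independent given D
    (hfact₂ : ∀ d z w,
      pDZW P d z w * pD P d = pDZ P d z * pDW P d w)
    -- z depends only on the context dataset D:  z ⊥ x | D
    (hz : ∀ x d z, pXDZ P x d z * pD P d = pDZ P d z * pXD P x d) :
    objectiveL P + condEntropyYX P ≤ IyDx P - IZxD P := by
  have hC := C_zero hP hz
  have hB := B_eq hP hfact₁ hfact₂ hz
  have hA := A_bound hP hsum hMarkov
  unfold objectiveL
  linarith

end NPSA
end
end
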